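/- Fix r ≥ 1. Suppose given two families of rational numbers n_{g,β} and n′_{g,β}, indexed by integers g ≥ 0 and nonzero β ∈ ℕ^r, such that for each β only finitely many g have n_{g,β} ≠ 0 and only finitely many g have n′_{g,β} ≠ 0. In the ring of formal power series in v = (v_1,…,v_r) with coefficients in ℚ((q)), form Z = exp( Σ_{γ∈ℕ^r, γ≠0} Σ_{k≥1} Σ_{g≥0} n_{g,γ} · ((−1)^{g−1}/k) · ((−q)^k − 2 + (−q)^{−k})^{g−1} · v^{kγ} ), and likewise Z′ from the family n′. If for every nonzero β ∈ ℕ^r and every integer m ≤ 1 the coefficient of q^m v^β in Z equals the coefficient of q^m v^β in Z′, then n_{g,β} = n′_{g,β} for all g ≥ 0 and all nonzero β, and hence Z = Z′. -/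

import Mathlib

open HahnSeries
open PowerSeries

/-- `(−q)^k − 2 + (−q)^{−k}` as a formal Laurent series over `ℚ`. -/
noncomputable def PhiK (k : ℕ) : LaurentSeries ℚ :=
  HahnSeries.single (k : ℤ) ((-1 : ℚ) ^ k) - 2 + HahnSeries.single (-(k : ℤ)) ((-1 : ℚ) ^ k)

/-- The coefficient of `q^m v^β` in the Gopakumar–Vafa exponent
`Σ_{γ ≠ 0} Σ_{k ≥ 1} Σ_{g ≥ 0} n_{g,γ} ((−1)^{g−1}/k) ((−q)^k − 2 + (−q)^{−k})^{g−1} v^{kγ}`. -/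
noncomputable def gvExponentCoeff (r : ℕ) (n : ℕ → (Fin r →₀ ℕ) → ℚ)
    (β : Fin r →₀ ℕ) (m : ℤ) : ℚ :=
  ∑ᶠ g : ℕ, ∑ᶠ k : ℕ, ∑ᶠ γ : Fin r →₀ ℕ,
    if γ ≠ 0 ∧ 1 ≤ k ∧ k • γ = β then
      n g γ * ((-1 : ℚ) ^ ((g : ℤ) - 1) / (k : ℚ)) * ((PhiK k) ^ ((g : ℤ) - 1)).coeff m
    else 0

noncomputable abbrev qq : LaurentSeries ℚ := HahnSeries.single (1 : ℤ) (1 : ℚ)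

lemma onePlusQ_pow_coe (N : ℕ) :
    ((((1 + PowerSeries.X) ^ N : PowerSeries ℚ) : LaurentSeries ℚ)) = (1 + qq) ^ N := by
  rw [map_pow, map_add, map_one, ofPowerSeries_X]

lemma onePlusQ_pow_coeff_neg (N : ℕ) (m : ℤ) (hm : m < 0) :
    ((1 + qq) ^ N).coeff m = 0 := by
  rw [← onePlusQ_pow_coe, PowerSeries.coeff_coe, if_pos hm]

lemma onePlusQ_pow_coeff_zero (N : ℕ) :
    ((1 + qq) ^ N).coeff 0 = 1 := by
  rw [← onePlusQ_pow_coe, PowerSeries.coeff_coe, if_neg (by norm_num)]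
  simp

lemma neg_single (a : ℤ) (r : ℚ) :
    -(HahnSeries.single a r : LaurentSeries ℚ) = HahnSeries.single a (-r) := by
  ext b; rcases eq_or_ne b a with h | h <;> simp [h, coeff_single]

lemma two_coeff (a : ℤ) : (2 : LaurentSeries ℚ).coeff a = if a = 0 then 2 else 0 := by
  rw [show (2 : LaurentSeries ℚ) = 1 + 1 by norm_num]
  by_cases h : a = 0 <;> simp [h, HahnSeries.coeff_add, HahnSeries.coeff_one]; norm_num

lemma sq_expand : ((1 + qq) ^ 2 : LaurentSeries ℚ)
    = 1 + (HahnSeries.single (1:ℤ) (2:ℚ)) + HahnSeries.single (2:ℤ) (1:ℚ) := by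
  have h1 : qq * qq = HahnSeries.single (2:ℤ) (1:ℚ) := by
    rw [single_mul_single]; norm_num
  have h2 : qq + qq = HahnSeries.single (1:ℤ) (2:ℚ) := by
    ext a; by_cases h : a = 1 <;> simp [h, coeff_single]; norm_num
  rw [pow_two, mul_add, add_mul, add_mul, mul_one, one_mul, h1, ← h2]; ring

lemma PhiK_one_eq : PhiK 1 = -(HahnSeries.single (-1:ℤ) (1:ℚ)) * (1 + qq) ^ 2 := by
  rw [neg_single, sq_expand, mul_add, mul_add, mul_one, single_mul_single, single_mul_single, PhiK]
  norm_num
  ext a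
  rcases eq_or_ne a 1 with h | h <;> rcases eq_or_ne a 0 with h0 | h0 <;>
    rcases eq_or_ne a (-1) with h1 | h1 <;>
    simp_all [coeff_single, two_coeff, HahnSeries.coeff_sub, HahnSeries.coeff_add, HahnSeries.coeff_one] <;> norm_num

lemma PhiK_one_ne_zero : PhiK 1 ≠ 0 := by
  intro h
  have := congrArg (fun x => HahnSeries.coeff x (-1 : ℤ)) h
  simp [PhiK, coeff_single, two_coeff, HahnSeries.coeff_sub, HahnSeries.coeff_add] at this

lemma single_zero_zpow (c : ℚ) (z : ℤ) (hc : c ≠ 0) :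
    (HahnSeries.single (0:ℤ) c : LaurentSeries ℚ) ^ z = HahnSeries.single (0:ℤ) (c ^ z) := by
  have hinv : ∀ d : ℚ, d ≠ 0 → (HahnSeries.single (0:ℤ) d : LaurentSeries ℚ)⁻¹
      = HahnSeries.single (0:ℤ) d⁻¹ := by
    intro d hd
    refine (inv_eq_of_mul_eq_one_right ?_)
    rw [single_mul_single, mul_inv_cancel₀ hd, add_zero, single_zero_one]
  cases z with
  | ofNat k =>
    rw [Int.ofNat_eq_coe, zpow_natCast, zpow_natCast, single_pow, smul_zero]
  | negSucc k =>
    rw [zpow_negSucc, zpow_negSucc, single_pow, smul_zero, hinv _ (pow_ne_zero _ hc)]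

lemma negOne_zpow (z : ℤ) :
    ((-1 : LaurentSeries ℚ)) ^ z = HahnSeries.single (0:ℤ) ((-1:ℚ) ^ z) := by
  rw [show (-1 : LaurentSeries ℚ) = HahnSeries.single (0:ℤ) (-1:ℚ) by
    rw [← neg_single, single_zero_one], single_zero_zpow _ _ (by norm_num)]

noncomputable def uSer (g : ℕ) : LaurentSeries ℚ :=
  HahnSeries.single ((1:ℤ) - g) (1:ℚ) * (1 + qq) ^ (2 * g)

lemma PhiK_pow_mul (g : ℕ) :
    PhiK 1 ^ ((g:ℤ) - 1) * (1 + qq) ^ 2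
      = (-1 : LaurentSeries ℚ) ^ ((g:ℤ) - 1) *
        uSer g := by
  rw [uSer]
  cases g with
  | zero =>
    have hss : HahnSeries.single (-1:ℤ) (-1:ℚ) * HahnSeries.single (1:ℤ) (1:ℚ)
        = (-1 : LaurentSeries ℚ) := by
      rw [single_mul_single]; norm_num
    rw [show ((0:ℕ):ℤ) - 1 = -1 by norm_num, zpow_neg, zpow_one, zpow_neg, zpow_one]
    apply mul_left_cancel₀ PhiK_one_ne_zero
    rw [← mul_assoc, mul_inv_cancel₀ PhiK_one_ne_zero, one_mul, PhiK_one_eq, neg_single]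
    rw [show ((-1 : LaurentSeries ℚ))⁻¹ = -1 by norm_num]
    norm_num
    have hs0 : HahnSeries.single (-1:ℤ) (1:ℚ) + HahnSeries.single (-1:ℤ) (-1:ℚ)
        = (0 : LaurentSeries ℚ) := by rw [← neg_single, add_neg_cancel]
    linear_combination ((1 + qq)^2) * hss - (qq * (1 + qq)^2) * hs0
  | succ s =>
    have h1 : ((s+1:ℕ):ℤ) - 1 = (s:ℤ) := by push_cast; ring
    rw [h1, zpow_natCast, zpow_natCast, PhiK_one_eq, neg_single, mul_pow, single_pow]
    rw [mul_assoc, ← pow_mul, ← _root_.pow_add]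
    rw [show ((s:ℕ)) • (-1:ℤ) = (0:ℤ) + (1 - ((s+1:ℕ):ℤ)) by rw [nsmul_eq_mul]; push_cast; ring]
    rw [show ((-1:ℚ)) ^ s = (-1:ℚ) ^ s * 1 ^ s by norm_num, ← single_mul_single,
      show (-1:ℚ) ^ s = (-1:ℚ) ^ ((s:ℤ)) by rw [zpow_natCast], ← negOne_zpow,
      zpow_natCast]
    rw [show 2 * (s + 1) = 2 * s + 2 by ring]
    ring

lemma sum_coeff {α : Type*} (s : Finset α) (f : α → LaurentSeries ℚ) (m : ℤ) :
    (∑ x ∈ s, f x).coeff m = ∑ x ∈ s, (f x).coeff m :=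
  map_sum (coeff.addMonoidHom m) f s

lemma uSer_coeff_lt (g : ℕ) (m : ℤ) (hm : m < 1 - g) : (uSer g).coeff m = 0 := by
  have h := coeff_single_mul_add (r := (1:ℚ)) (x := (1 + qq) ^ (2 * g))
    (b := (1:ℤ) - g) (a := m - ((1:ℤ) - g))
  rw [sub_add_cancel] at h
  rw [uSer, h, onePlusQ_pow_coeff_neg _ _ (by omega), mul_zero]

lemma uSer_coeff_top (g : ℕ) : (uSer g).coeff ((1:ℤ) - g) = 1 := by
  have h := coeff_single_mul_add (r := (1:ℚ)) (x := (1 + qq) ^ (2 * g))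
    (b := (1:ℤ) - g) (a := (0:ℤ))
  rw [zero_add] at h
  rw [uSer, h, onePlusQ_pow_coeff_zero, mul_one]

lemma triangular (G : ℕ) (D : ℕ → ℚ) (hD : ∀ g, G ≤ g → D g = 0)
    (h : ∀ m : ℤ, m ≤ 1 → (∑ g ∈ Finset.range G, D g • uSer g).coeff m = 0) :
    ∀ g, D g = 0 := by
  have main : ∀ t : ℕ, ∀ g, G - t ≤ g → D g = 0 := by
    intro t
    induction t with
    | zero => intro g hg; exact hD g (by omega)
    | succ t ih =>
      intro g hg
      by_cases h2 : G - t ≤ g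
      · exact ih g h2
      · have hgG : g < G := by omega
        have hm : (1:ℤ) - g ≤ 1 := by
          have : (0:ℤ) ≤ g := Int.natCast_nonneg g
          omega
        have hc := h ((1:ℤ) - g) hm
        rw [sum_coeff] at hc
        rw [Finset.sum_eq_single g] at hc
        · rw [HahnSeries.coeff_smul, uSer_coeff_top, smul_eq_mul, mul_one] at hc
          exact hc
        · intro g' hg' hne
          rcases lt_or_gt_of_ne hne with hlt | hgt
          · -- g' < g : coefficient vanishes
            have hcast : ((1:ℤ) - g) < 1 - g' := by
              have : (g' : ℤ) < g := by exact_mod_cast hlt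
              omega
            rw [HahnSeries.coeff_smul, uSer_coeff_lt g' _ hcast, smul_eq_mul, mul_zero]
          · -- g' > g : D g' = 0
            have : D g' = 0 := ih g' (by omega)
            rw [this, zero_smul, HahnSeries.coeff_zero]
        · intro hgmem
          exact absurd (Finset.mem_range.2 hgG) hgmem
  intro g
  exact main G g (by omega)

lemma key_vanish (G : ℕ) (D : ℕ → ℚ) (hD : ∀ g, G ≤ g → D g = 0)
    (h : ∀ m : ℤ, m ≤ 1 →
      ∑ g ∈ Finset.range G, D g * (-1:ℚ) ^ ((g:ℤ)-1) * (PhiK 1 ^ ((g:ℤ)-1)).coeff m = 0) :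
    ∀ g, D g = 0 := by
  set S : LaurentSeries ℚ :=
    ∑ g ∈ Finset.range G,
      HahnSeries.single (0:ℤ) (D g * (-1:ℚ) ^ ((g:ℤ)-1)) * (PhiK 1 ^ ((g:ℤ)-1)) with hSdef
  have hS : ∀ m : ℤ, m ≤ 1 → S.coeff m = 0 := by
    intro m hm
    rw [hSdef, sum_coeff]
    simpa only [coeff_single_zero_mul] using h m hm
  have hT : S * (1 + qq) ^ 2 = ∑ g ∈ Finset.range G, D g • uSer g := by
    rw [hSdef, Finset.sum_mul]
    refine Finset.sum_congr rfl fun g _ => ?_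
    rw [mul_assoc, PhiK_pow_mul, negOne_zpow, ← mul_assoc, single_mul_single, add_zero,
      mul_assoc (D g), ← mul_zpow]
    norm_num [single_zero_mul_eq_smul]
  have hTcoeff : ∀ m : ℤ, m ≤ 1 → (S * (1 + qq) ^ 2).coeff m = 0 := by
    intro m hm
    rw [sq_expand, mul_add, mul_add, mul_one]
    have e1 := coeff_mul_single_add (r := (2:ℚ)) (x := S) (b := (1:ℤ)) (a := m - 1)
    rw [sub_add_cancel] at e1
    have e2 := coeff_mul_single_add (r := (1:ℚ)) (x := S) (b := (2:ℤ)) (a := m - 2)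
    rw [sub_add_cancel] at e2
    rw [HahnSeries.coeff_add, HahnSeries.coeff_add, e1, e2,
      hS m hm, hS (m-1) (by omega), hS (m-2) (by omega)]
    ring
  exact triangular G D hD (fun m hm => by rw [← hT]; exact hTcoeff m hm)

def Deg {r : ℕ} (γ : Fin r →₀ ℕ) : ℕ := ∑ i, γ i

lemma Deg_eq_zero_iff {r : ℕ} (γ : Fin r →₀ ℕ) : Deg γ = 0 ↔ γ = 0 := by
  rw [Deg, Finset.sum_eq_zero_iff]
  constructor
  · intro h; ext i; exact h i (Finset.mem_univ i)
  · intro h i _; simp [h]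

lemma Deg_add {r : ℕ} (a b : Fin r →₀ ℕ) : Deg (a + b) = Deg a + Deg b := by
  simp [Deg, Finsupp.add_apply, Finset.sum_add_distrib]

lemma Deg_smul {r : ℕ} (k : ℕ) (γ : Fin r →₀ ℕ) : Deg (k • γ) = k * Deg γ := by
  simp [Deg, Finsupp.smul_apply, Finset.mul_sum]

lemma Deg_mono {r : ℕ} {a b : Fin r →₀ ℕ} (h : a ≤ b) : Deg a ≤ Deg b :=
  Finset.sum_le_sum fun i _ => Finsupp.le_def.1 h i

lemma le_of_smul_eq {r : ℕ} {k : ℕ} {γ β : Fin r →₀ ℕ} (hk : 1 ≤ k) (h : k • γ = β) :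
    γ ≤ β := by
  rw [← h, Finsupp.le_def]
  intro i
  rw [Finsupp.smul_apply, smul_eq_mul]
  exact Nat.le_mul_of_pos_left _ (by omega)

lemma gv_eq_sum (r : ℕ) (n : ℕ → (Fin r →₀ ℕ) → ℚ) (β : Fin r →₀ ℕ) (m : ℤ) (G : ℕ)
    (hG : ∀ γ : Fin r →₀ ℕ, γ ≤ β → γ ≠ 0 → ∀ g, G ≤ g → n g γ = 0) :
    gvExponentCoeff r n β m =
      ∑ g ∈ Finset.range G, ∑ k ∈ Finset.Icc 1 (Deg β), ∑ γ ∈ Finset.Iic β,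
        (if γ ≠ 0 ∧ 1 ≤ k ∧ k • γ = β then
          n g γ * ((-1 : ℚ) ^ ((g : ℤ) - 1) / (k : ℚ)) * ((PhiK k) ^ ((g : ℤ) - 1)).coeff m
        else 0) := by
  rw [gvExponentCoeff]
  have hγ : ∀ g k : ℕ,
      (∑ᶠ γ : Fin r →₀ ℕ, if γ ≠ 0 ∧ 1 ≤ k ∧ k • γ = β then
          n g γ * ((-1 : ℚ) ^ ((g : ℤ) - 1) / (k : ℚ)) * ((PhiK k) ^ ((g : ℤ) - 1)).coeff m
        else 0)
      = ∑ γ ∈ Finset.Iic β, if γ ≠ 0 ∧ 1 ≤ k ∧ k • γ = β then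
          n g γ * ((-1 : ℚ) ^ ((g : ℤ) - 1) / (k : ℚ)) * ((PhiK k) ^ ((g : ℤ) - 1)).coeff m
        else 0 := by
    intro g k
    apply finsum_eq_sum_of_support_subset
    intro γ hγ
    simp only [Function.mem_support] at hγ
    by_cases hc : γ ≠ 0 ∧ 1 ≤ k ∧ k • γ = β
    · simp only [Finset.coe_sort_coe, Finset.mem_coe, Finset.mem_Iic]
      exact le_of_smul_eq hc.2.1 hc.2.2
    · exact absurd (if_neg hc) hγ
  have hk : ∀ g : ℕ,
      (∑ᶠ k : ℕ, ∑ γ ∈ Finset.Iic β, if γ ≠ 0 ∧ 1 ≤ k ∧ k • γ = β then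
          n g γ * ((-1 : ℚ) ^ ((g : ℤ) - 1) / (k : ℚ)) * ((PhiK k) ^ ((g : ℤ) - 1)).coeff m
        else 0)
      = ∑ k ∈ Finset.Icc 1 (Deg β), ∑ γ ∈ Finset.Iic β,
          if γ ≠ 0 ∧ 1 ≤ k ∧ k • γ = β then
            n g γ * ((-1 : ℚ) ^ ((g : ℤ) - 1) / (k : ℚ)) * ((PhiK k) ^ ((g : ℤ) - 1)).coeff m
          else 0 := by
    intro g
    apply finsum_eq_sum_of_support_subset
    intro k hk
    simp only [Function.mem_support] at hk
    simp only [Finset.coe_sort_coe, Finset.mem_coe, Finset.mem_Icc]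
    by_contra hmem
    apply hk
    apply Finset.sum_eq_zero
    intro γ _
    rw [if_neg]
    rintro ⟨h1, h2, h3⟩
    apply hmem
    refine ⟨h2, ?_⟩
    have hd : Deg β = k * Deg γ := by rw [← h3, Deg_smul]
    have hγ1 : 1 ≤ Deg γ := by
      rcases Nat.eq_zero_or_pos (Deg γ) with h | h
      · exact absurd ((Deg_eq_zero_iff γ).1 h) h1
      · exact h
    calc k ≤ k * Deg γ := Nat.le_mul_of_pos_right _ (by omega)
    _ = Deg β := hd.symm
  have hg :
      (∑ᶠ g : ℕ, ∑ k ∈ Finset.Icc 1 (Deg β), ∑ γ ∈ Finset.Iic β,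
        if γ ≠ 0 ∧ 1 ≤ k ∧ k • γ = β then
          n g γ * ((-1 : ℚ) ^ ((g : ℤ) - 1) / (k : ℚ)) * ((PhiK k) ^ ((g : ℤ) - 1)).coeff m
        else 0)
      = ∑ g ∈ Finset.range G, ∑ k ∈ Finset.Icc 1 (Deg β), ∑ γ ∈ Finset.Iic β,
          if γ ≠ 0 ∧ 1 ≤ k ∧ k • γ = β then
            n g γ * ((-1 : ℚ) ^ ((g : ℤ) - 1) / (k : ℚ)) * ((PhiK k) ^ ((g : ℤ) - 1)).coeff m
          else 0 := by
    apply finsum_eq_sum_of_support_subset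
    intro g hg
    simp only [Function.mem_support] at hg
    simp only [Finset.coe_sort_coe, Finset.mem_coe, Finset.mem_range]
    by_contra hmem
    apply hg
    apply Finset.sum_eq_zero
    intro k _
    apply Finset.sum_eq_zero
    intro γ _
    by_cases hc : γ ≠ 0 ∧ 1 ≤ k ∧ k • γ = β
    · rw [if_pos hc, hG γ (le_of_smul_eq hc.2.1 hc.2.2) hc.1 g (by omega), zero_mul, zero_mul]
    · exact if_neg hc
  calc _ = ∑ᶠ g : ℕ, ∑ᶠ k : ℕ, ∑ γ ∈ Finset.Iic β, _ := by
        exact finsum_congr fun g => finsum_congr fun k => hγ g k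
    _ = ∑ᶠ g : ℕ, ∑ k ∈ Finset.Icc 1 (Deg β), ∑ γ ∈ Finset.Iic β, _ := finsum_congr hk
    _ = _ := hg

lemma gv_zero (r : ℕ) (n : ℕ → (Fin r →₀ ℕ) → ℚ) (m : ℤ) :
    gvExponentCoeff r n 0 m = 0 := by
  rw [gvExponentCoeff]
  have : ∀ g k : ℕ, ∀ γ : Fin r →₀ ℕ,
      (if γ ≠ 0 ∧ 1 ≤ k ∧ k • γ = (0 : Fin r →₀ ℕ) then
        n g γ * ((-1 : ℚ) ^ ((g : ℤ) - 1) / (k : ℚ)) * ((PhiK k) ^ ((g : ℤ) - 1)).coeff m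
      else 0) = 0 := by
    intro g k γ
    rw [if_neg]
    rintro ⟨h1, h2, h3⟩
    apply h1
    have := Deg_smul k γ
    rw [h3] at this
    have h0 : Deg (0 : Fin r →₀ ℕ) = 0 := (Deg_eq_zero_iff _).2 rfl
    rw [h0] at this
    rcases Nat.mul_eq_zero.1 this.symm with h | h
    · omega
    · exact (Deg_eq_zero_iff _).1 h
  simp only [this, finsum_zero]

lemma gv_congr (r : ℕ) (n n' : ℕ → (Fin r →₀ ℕ) → ℚ) (β : Fin r →₀ ℕ) (m : ℤ)
    (h : ∀ g : ℕ, ∀ γ : Fin r →₀ ℕ, γ ≠ 0 → γ ≤ β → n g γ = n' g γ) :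
    gvExponentCoeff r n β m = gvExponentCoeff r n' β m := by
  rw [gvExponentCoeff, gvExponentCoeff]
  refine finsum_congr fun g => finsum_congr fun k => finsum_congr fun γ => ?_
  by_cases hc : γ ≠ 0 ∧ 1 ≤ k ∧ k • γ = β
  · rw [if_pos hc, if_pos hc, h g γ hc.1 (le_of_smul_eq hc.2.1 hc.2.2)]
  · rw [if_neg hc, if_neg hc]

lemma gv_diff (r : ℕ) (n n' : ℕ → (Fin r →₀ ℕ) → ℚ) (β : Fin r →₀ ℕ) (m : ℤ)
    (hβ : β ≠ 0) (G : ℕ)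
    (hG : ∀ γ : Fin r →₀ ℕ, γ ≤ β → γ ≠ 0 → ∀ g, G ≤ g → n g γ = 0)
    (hG' : ∀ γ : Fin r →₀ ℕ, γ ≤ β → γ ≠ 0 → ∀ g, G ≤ g → n' g γ = 0)
    (IH : ∀ γ : Fin r →₀ ℕ, γ ≠ 0 → Deg γ < Deg β → ∀ g, n g γ = n' g γ) :
    gvExponentCoeff r n β m - gvExponentCoeff r n' β m =
      ∑ g ∈ Finset.range G,
        (n g β - n' g β) * (-1 : ℚ) ^ ((g : ℤ) - 1) * (PhiK 1 ^ ((g : ℤ) - 1)).coeff m := by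
  have hDβ : 1 ≤ Deg β := by
    rcases Nat.eq_zero_or_pos (Deg β) with h | h
    · exact absurd ((Deg_eq_zero_iff β).1 h) hβ
    · exact h
  rw [gv_eq_sum r n β m G hG, gv_eq_sum r n' β m G hG', ← Finset.sum_sub_distrib]
  refine Finset.sum_congr rfl fun g _ => ?_
  rw [← Finset.sum_sub_distrib]
  rw [Finset.sum_eq_single 1]
  · rw [← Finset.sum_sub_distrib, Finset.sum_eq_single β]
    · have hc : β ≠ 0 ∧ 1 ≤ 1 ∧ (1:ℕ) • β = β := ⟨hβ, le_refl 1, one_smul _ _⟩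
      rw [if_pos hc, if_pos hc]
      push_cast
      ring
    · intro γ _ hne
      have hc : ¬(γ ≠ 0 ∧ 1 ≤ 1 ∧ (1:ℕ) • γ = β) := by
        rintro ⟨h1, h2, h3⟩
        rw [one_smul] at h3
        exact hne h3
      rw [if_neg hc, if_neg hc, sub_self]
    · intro hmem
      exact absurd (Finset.mem_Iic.2 (le_refl β)) hmem
  · intro k _ hk1
    rw [← Finset.sum_sub_distrib]
    apply Finset.sum_eq_zero
    intro γ _
    by_cases hc : γ ≠ 0 ∧ 1 ≤ k ∧ k • γ = β
    · have hγ1 : 1 ≤ Deg γ := by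
        rcases Nat.eq_zero_or_pos (Deg γ) with h | h
        · exact absurd ((Deg_eq_zero_iff γ).1 h) hc.1
        · exact h
      have hd : Deg β = k * Deg γ := by rw [← hc.2.2, Deg_smul]
      have hk2 : 2 ≤ k := by
        rcases Nat.lt_or_ge k 2 with h | h
        · exact absurd (by omega : k = 1) hk1
        · exact h
      have : Deg γ < Deg β := by rw [hd]; nlinarith
      rw [if_pos hc, if_pos hc, IH γ hc.1 this g, sub_self]
    · rw [if_neg hc, if_neg hc, sub_self]
  · intro hmem
    exact absurd (Finset.mem_Icc.2 ⟨le_refl 1, hDβ⟩) hmem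

section Mv
variable {r : ℕ} (E E' : MvPowerSeries (Fin r) (LaurentSeries ℚ))

/-- powers of series with zero constant coefficient vanish in low degree -/
lemma pow_coeff_vanish (h0 : MvPowerSeries.coeff 0 E = 0) :
    ∀ j : ℕ, ∀ γ : Fin r →₀ ℕ, Deg γ < j →
      MvPowerSeries.coeff γ (E ^ j) = 0 := by
  intro j
  induction j with
  | zero => intro γ hγ; omega
  | succ j ih =>
    intro γ hγ
    rw [pow_succ, MvPowerSeries.coeff_mul]
    apply Finset.sum_eq_zero
    rintro ⟨a, b⟩ hab
    rw [Finset.HasAntidiagonal.mem_antidiagonal] at hab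
    by_cases hb : b = 0
    · rw [hb, h0, mul_zero]
    · have hbd : 1 ≤ Deg b := by
        rcases Nat.eq_zero_or_pos (Deg b) with h | h
        · exact absurd ((Deg_eq_zero_iff b).1 h) hb
        · exact h
      have : Deg a < j := by
        have := Deg_add a b
        rw [hab] at this
        omega
      rw [ih a this, zero_mul]

lemma pow_coeff_congr
    (h0 : MvPowerSeries.coeff 0 E = 0)
    (h0' : MvPowerSeries.coeff 0 E' = 0)
    (N : ℕ)
    (hlow : ∀ γ : Fin r →₀ ℕ, Deg γ < N →
      MvPowerSeries.coeff γ E = MvPowerSeries.coeff γ E') :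
    ∀ j : ℕ, ∀ γ : Fin r →₀ ℕ, Deg γ < N →
      MvPowerSeries.coeff γ (E ^ j)
        = MvPowerSeries.coeff γ (E' ^ j) := by
  intro j
  induction j with
  | zero => intro γ _; rfl
  | succ j ih =>
    intro γ hγ
    rw [pow_succ, pow_succ, MvPowerSeries.coeff_mul, MvPowerSeries.coeff_mul]
    refine Finset.sum_congr rfl ?_
    rintro ⟨a, b⟩ hab
    rw [Finset.HasAntidiagonal.mem_antidiagonal] at hab
    by_cases hb : b = 0
    · rw [hb, h0, h0', mul_zero, mul_zero]
    · have hbd : 1 ≤ Deg b := by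
        rcases Nat.eq_zero_or_pos (Deg b) with h | h
        · exact absurd ((Deg_eq_zero_iff b).1 h) hb
        · exact h
      have hab' : Deg a + Deg b = Deg γ := by rw [← Deg_add, hab]
      have ha : Deg a < N := by omega
      have hbN : Deg b < N := by omega
      rw [ih a ha, hlow b hbN]

lemma pow_coeff_eq_of_two_le
    (h0 : MvPowerSeries.coeff 0 E = 0)
    (h0' : MvPowerSeries.coeff 0 E' = 0)
    (β : Fin r →₀ ℕ)
    (hlow : ∀ γ : Fin r →₀ ℕ, Deg γ < Deg β →
      MvPowerSeries.coeff γ E = MvPowerSeries.coeff γ E') :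
    ∀ j : ℕ, MvPowerSeries.coeff β (E ^ (j + 2))
      = MvPowerSeries.coeff β (E' ^ (j + 2)) := by
  intro j
  have hconst : ∀ (F : MvPowerSeries (Fin r) (LaurentSeries ℚ)) (i : ℕ),
      MvPowerSeries.coeff 0 F = 0 →
      MvPowerSeries.coeff 0 (F ^ (i + 1)) = 0 := by
    intro F i hF
    have : MvPowerSeries.constantCoeff F = 0 := hF
    calc MvPowerSeries.coeff 0 (F ^ (i+1))
        = MvPowerSeries.constantCoeff (F ^ (i+1)) := rfl
      _ = 0 := by rw [map_pow, this, zero_pow (by omega)]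
  rw [show j + 2 = (j + 1) + 1 by ring, pow_succ E (j+1), pow_succ E' (j+1),
    MvPowerSeries.coeff_mul, MvPowerSeries.coeff_mul]
  refine Finset.sum_congr rfl ?_
  rintro ⟨a, b⟩ hab
  rw [Finset.HasAntidiagonal.mem_antidiagonal] at hab
  by_cases hb : b = 0
  · rw [hb, h0, h0', mul_zero, mul_zero]
  by_cases ha : a = 0
  · rw [ha, hconst E j h0, hconst E' j h0', zero_mul, zero_mul]
  · have hbd : 1 ≤ Deg b := by
      rcases Nat.eq_zero_or_pos (Deg b) with h | h
      · exact absurd ((Deg_eq_zero_iff b).1 h) hb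
      · exact h
    have had : 1 ≤ Deg a := by
      rcases Nat.eq_zero_or_pos (Deg a) with h | h
      · exact absurd ((Deg_eq_zero_iff a).1 h) ha
      · exact h
    have hab' : Deg a + Deg b = Deg β := by rw [← Deg_add, hab]
    rw [pow_coeff_congr E E' h0 h0' (Deg β) hlow (j+1) a (by omega), hlow b (by omega)]

end Mv


/-- **Lemma* 3.7** of Pandharipande–Thomas, "Curve counting via stable pairs in the derived
category".  Fix `r ≥ 1` and two families `n, n′` of rational numbers indexed by `g ≥ 0` and
nonzero `β ∈ ℕ^r`, each vanishing for `g` sufficiently large (for each fixed `β`).  Let `Z`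
(resp. `Z′`) be the exponential `Σ_j E^j/j!` of the corresponding Gopakumar–Vafa exponent `E`
(resp. `E′`).  If for every nonzero `β` and every `m ≤ 1` the coefficient of `q^m v^β` in `Z`
equals that in `Z′`, then `n = n′` on nonzero classes and `Z = Z′`: the partition function is
uniquely determined by the invariants `P_{n,β}` with `n ≤ 1`. -/
theorem partition_function_determined_by_low_invariants (r : ℕ) (hr : 1 ≤ r)
    (n n' : ℕ → (Fin r →₀ ℕ) → ℚ)
    (hvan : ∀ β : Fin r →₀ ℕ, β ≠ 0 → ∃ G : ℕ, ∀ g : ℕ, G ≤ g → n g β = 0)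
    (hvan' : ∀ β : Fin r →₀ ℕ, β ≠ 0 → ∃ G : ℕ, ∀ g : ℕ, G ≤ g → n' g β = 0)
    (E E' Z Z' : MvPowerSeries (Fin r) (LaurentSeries ℚ))
    (hE : ∀ (β : Fin r →₀ ℕ) (m : ℤ),
      (MvPowerSeries.coeff β E).coeff m = gvExponentCoeff r n β m)
    (hE' : ∀ (β : Fin r →₀ ℕ) (m : ℤ),
      (MvPowerSeries.coeff β E').coeff m = gvExponentCoeff r n' β m)
    (hZ : ∀ (β : Fin r →₀ ℕ) (m : ℤ),
      (MvPowerSeries.coeff β Z).coeff m =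
        ∑ᶠ j : ℕ, ((j.factorial : ℚ))⁻¹ *
          (MvPowerSeries.coeff β (E ^ j)).coeff m)
    (hZ' : ∀ (β : Fin r →₀ ℕ) (m : ℤ),
      (MvPowerSeries.coeff β Z').coeff m =
        ∑ᶠ j : ℕ, ((j.factorial : ℚ))⁻¹ *
          (MvPowerSeries.coeff β (E' ^ j)).coeff m)
    (hlow : ∀ (β : Fin r →₀ ℕ), β ≠ 0 → ∀ m : ℤ, m ≤ 1 →
      (MvPowerSeries.coeff β Z).coeff m =
        (MvPowerSeries.coeff β Z').coeff m) :
    (∀ (g : ℕ) (β : Fin r →₀ ℕ), β ≠ 0 → n g β = n' g β) ∧ Z = Z' := by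
  classical
  have hchoice : ∀ γ : Fin r →₀ ℕ, ∃ G : ℕ, ∀ g, G ≤ g → γ ≠ 0 → n g γ = 0 ∧ n' g γ = 0 := by
    intro γ
    by_cases hγ : γ = 0
    · exact ⟨0, fun g _ h => absurd hγ h⟩
    · obtain ⟨G1, h1⟩ := hvan γ hγ
      obtain ⟨G2, h2⟩ := hvan' γ hγ
      exact ⟨max G1 G2, fun g hg _ =>
        ⟨h1 g (le_trans (le_max_left _ _) hg), h2 g (le_trans (le_max_right _ _) hg)⟩⟩
  choose Gb hGb using hchoice
  have hE0 : MvPowerSeries.coeff 0 E = 0 := by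
    ext m
    rw [hE, gv_zero, HahnSeries.coeff_zero]
  have hE'0 : MvPowerSeries.coeff 0 E' = 0 := by
    ext m
    rw [hE', gv_zero, HahnSeries.coeff_zero]
  have main : ∀ N : ℕ, ∀ β : Fin r →₀ ℕ, Deg β ≤ N → β ≠ 0 → ∀ g, n g β = n' g β := by
    intro N
    induction N using Nat.strong_induction_on with
    | _ N IH =>
      intro β hβN hβ
      have hDβ : 1 ≤ Deg β := by
        rcases Nat.eq_zero_or_pos (Deg β) with h | h
        · exact absurd ((Deg_eq_zero_iff β).1 h) hβ
        · exact h
      have IH' : ∀ γ : Fin r →₀ ℕ, γ ≠ 0 → Deg γ < Deg β → ∀ g, n g γ = n' g γ := by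
        intro γ h1 h2 g
        exact IH (Deg γ) (by omega) γ le_rfl h1 g
      have EE' : ∀ γ : Fin r →₀ ℕ, Deg γ < Deg β →
          MvPowerSeries.coeff γ E
            = MvPowerSeries.coeff γ E' := by
        intro γ hγ
        ext m
        rw [hE, hE']
        exact gv_congr r n n' γ m fun g γ' h1 h2 =>
          IH' γ' h1 (lt_of_le_of_lt (Deg_mono h2) hγ) g
      set G : ℕ := (Finset.Iic β).sup Gb with hGdef
      have hGn : ∀ γ : Fin r →₀ ℕ, γ ≤ β → γ ≠ 0 → ∀ g, G ≤ g → n g γ = 0 := by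
        intro γ hγle hγ g hg
        have : Gb γ ≤ G := Finset.le_sup (Finset.mem_Iic.2 hγle)
        exact (hGb γ g (by omega) hγ).1
      have hGn' : ∀ γ : Fin r →₀ ℕ, γ ≤ β → γ ≠ 0 → ∀ g, G ≤ g → n' g γ = 0 := by
        intro γ hγle hγ g hg
        have : Gb γ ≤ G := Finset.le_sup (Finset.mem_Iic.2 hγle)
        exact (hGb γ g (by omega) hγ).2
      have hcoeffE : ∀ m : ℤ, m ≤ 1 →
          (MvPowerSeries.coeff β E).coeff m
            = (MvPowerSeries.coeff β E').coeff m := by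
        intro m hm
        have hsupp : ∀ F : MvPowerSeries (Fin r) (LaurentSeries ℚ),
            MvPowerSeries.coeff 0 F = 0 →
            Function.support (fun j : ℕ => ((j.factorial : ℚ))⁻¹ *
              (MvPowerSeries.coeff β (F ^ j)).coeff m)
              ⊆ ↑(Finset.range (Deg β + 1)) := by
          intro F hF j hj
          simp only [Function.mem_support] at hj
          simp only [Finset.coe_sort_coe, Finset.mem_coe, Finset.mem_range]
          by_contra hmem
          apply hj
          rw [pow_coeff_vanish F hF j β (by omega), HahnSeries.coeff_zero, mul_zero]
        have h1 := hZ β m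
        have h2 := hZ' β m
        rw [finsum_eq_sum_of_support_subset _ (hsupp E hE0)] at h1
        rw [finsum_eq_sum_of_support_subset _ (hsupp E' hE'0)] at h2
        have hzero : ∑ j ∈ Finset.range (Deg β + 1),
            (((j.factorial : ℚ))⁻¹ *
              (MvPowerSeries.coeff β (E ^ j)).coeff m
            - ((j.factorial : ℚ))⁻¹ *
              (MvPowerSeries.coeff β (E' ^ j)).coeff m) = 0 := by
          rw [Finset.sum_sub_distrib, ← h1, ← h2, hlow β hβ m hm, sub_self]
        rw [Finset.sum_eq_single 1] at hzero
        · simp only [Nat.factorial_one, Nat.cast_one, inv_one, one_mul] at hzero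
          rw [pow_one, pow_one] at hzero
          linarith [hzero]
        · intro j hjmem hj1
          match j, hj1 with
          | 0, _ => simp
          | (i+2), _ =>
            rw [pow_coeff_eq_of_two_le E E' hE0 hE'0 β EE' i, sub_self]
        · intro hmem
          exact absurd (Finset.mem_range.2 (by omega)) hmem
      have hgv : ∀ m : ℤ, m ≤ 1 →
          ∑ g ∈ Finset.range G,
            (n g β - n' g β) * (-1:ℚ) ^ ((g:ℤ)-1) * (PhiK 1 ^ ((g:ℤ)-1)).coeff m = 0 := by
        intro m hm
        rw [← gv_diff r n n' β m hβ G hGn hGn' IH', ← hE, ← hE', hcoeffE m hm, sub_self]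
      have hD : ∀ g, G ≤ g → n g β - n' g β = 0 := by
        intro g hg
        have hGbβ : Gb β ≤ G := Finset.le_sup (Finset.mem_Iic.2 (le_refl β))
        rw [(hGb β g (by omega) hβ).1, (hGb β g (by omega) hβ).2, sub_zero]
      intro g
      have := key_vanish G (fun g => n g β - n' g β) hD hgv g
      linarith [this]
  have hnn' : ∀ (g : ℕ) (β : Fin r →₀ ℕ), β ≠ 0 → n g β = n' g β :=
    fun g β hβ => main (Deg β) β le_rfl hβ g
  refine ⟨hnn', ?_⟩
  have hEE : E = E' := by
    ext γ m
    rw [hE, hE']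
    exact gv_congr r n n' γ m fun g γ' h1 _ => hnn' g γ' h1
  ext β m
  rw [hZ, hZ', hEE]
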